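/- Let L be the 8×4 (0,1)-matrix with rows (1,1,1,1),(1,1,0,0),(1,1,0,0),(1,0,1,0),(1,0,1,0),(0,1,1,0),(0,1,1,0),(0,0,0,0) and R the 8×4 (0,1)-matrix with rows (1,1,1,1),(1,1,0,0),(1,1,0,0),(1,0,1,0),(1,0,1,0),(1,0,0,1),(1,0,0,1),(0,0,0,0). Then (L,R) obeys region dominance: it is balanced and for every X ⊆ {1,...,8} the number of columns of L having a 1 in every row i ∈ X is at most the number of such columns of R; but L is not binary-combinations majorized by R: for v = (0,1,0,1,0,1,0,0) one has vL = (2,2,2,0) and vR = (3,1,1,1), and vL is not majorized by vR. -/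

import Mathlib

/-- `x` is majorized by `y`: for every `k`, the sum of the `k` largest entries of `x`
is at most the sum of the `k` largest entries of `y` (expressed as: every `k`-element
partial sum of `x` is dominated by some `k`-element partial sum of `y`), and the total
sums agree. -/
def MajorizedBy {d : ℕ} (x y : Fin d → ℝ) : Prop :=
  (∀ s : Finset (Fin d), ∃ t : Finset (Fin d), t.card = s.card ∧
    ∑ i ∈ s, x i ≤ ∑ i ∈ t, y i) ∧
  ∑ i, x i = ∑ i, y i

def L15 : Fin 8 → Fin 4 → ℝ :=
  ![![1, 1, 1, 1],
     ![1, 1, 0, 0],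
     ![1, 1, 0, 0],
     ![1, 0, 1, 0],
     ![1, 0, 1, 0],
     ![0, 1, 1, 0],
     ![0, 1, 1, 0],
     ![0, 0, 0, 0]]

def R15 : Fin 8 → Fin 4 → ℝ :=
  ![![1, 1, 1, 1],
     ![1, 1, 0, 0],
     ![1, 1, 0, 0],
     ![1, 0, 1, 0],
     ![1, 0, 1, 0],
     ![1, 0, 0, 1],
     ![1, 0, 0, 1],
     ![0, 0, 0, 0]]

def Lb : Fin 8 → Fin 4 → Bool :=
  ![![true, true, true, true],
     ![true, true, false, false],
     ![true, true, false, false],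
     ![true, false, true, false],
     ![true, false, true, false],
     ![false, true, true, false],
     ![false, true, true, false],
     ![false, false, false, false]]

def Rb : Fin 8 → Fin 4 → Bool :=
  ![![true, true, true, true],
     ![true, true, false, false],
     ![true, true, false, false],
     ![true, false, true, false],
     ![true, false, true, false],
     ![true, false, false, true],
     ![true, false, false, true],
     ![false, false, false, false]]

lemma L_iff (i : Fin 8) (n : Fin 4) : L15 i n = 1 ↔ Lb i n = true := by
  fin_cases i <;> fin_cases n <;> norm_num [L15, Lb]

lemma R_iff (i : Fin 8) (n : Fin 4) : R15 i n = 1 ↔ Rb i n = true := by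
  fin_cases i <;> fin_cases n <;> norm_num [R15, Rb]

set_option maxRecDepth 100000 in
lemma domb : ∀ X : Finset (Fin 8),
      (Finset.univ.filter fun n : Fin 4 => ∀ i ∈ X, Lb i n = true).card ≤
      (Finset.univ.filter fun n : Fin 4 => ∀ i ∈ X, Rb i n = true).card := by decide

/-- `(L15, R15)` is balanced and obeys region dominance, but `L15`
is not binary-combinations majorized by `R15`: for `v = (0,1,0,1,0,1,0,0)` one has
`vL15 = (2,2,2,0)` and `vR15 = (3,1,1,1)`, and `vL15` is not majorized by `vR15`. -/
theorem stmt_15 :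
    (∀ i : Fin 8, ∑ n, L15 i n = ∑ n, R15 i n) ∧
    (∀ X : Finset (Fin 8),
      (Finset.univ.filter fun n : Fin 4 => ∀ i ∈ X, L15 i n = 1).card ≤
      (Finset.univ.filter fun n : Fin 4 => ∀ i ∈ X, R15 i n = 1).card) ∧
    (fun n => ∑ i, (![0, 1, 0, 1, 0, 1, 0, 0] : Fin 8 → ℝ) i * L15 i n) =
      (![2, 2, 2, 0] : Fin 4 → ℝ) ∧
    (fun n => ∑ i, (![0, 1, 0, 1, 0, 1, 0, 0] : Fin 8 → ℝ) i * R15 i n) =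
      (![3, 1, 1, 1] : Fin 4 → ℝ) ∧
    ¬ MajorizedBy (fun n => ∑ i, (![0, 1, 0, 1, 0, 1, 0, 0] : Fin 8 → ℝ) i * L15 i n)
        (fun n => ∑ i, (![0, 1, 0, 1, 0, 1, 0, 0] : Fin 8 → ℝ) i * R15 i n) ∧
    ¬ (∀ v : Fin 8 → ℝ, (∀ i, v i = 0 ∨ v i = 1) →
        MajorizedBy (fun n => ∑ i, v i * L15 i n) (fun n => ∑ i, v i * R15 i n)) := by
  have hL : (fun n => ∑ i, (![0, 1, 0, 1, 0, 1, 0, 0] : Fin 8 → ℝ) i * L15 i n) =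
      (![2, 2, 2, 0] : Fin 4 → ℝ) := by
    funext n; fin_cases n <;> norm_num [L15, Fin.sum_univ_succ, Matrix.cons_val_succ]
  have hR : (fun n => ∑ i, (![0, 1, 0, 1, 0, 1, 0, 0] : Fin 8 → ℝ) i * R15 i n) =
      (![3, 1, 1, 1] : Fin 4 → ℝ) := by
    funext n; fin_cases n <;> norm_num [R15, Fin.sum_univ_succ, Matrix.cons_val_succ]
  have hNM : ¬ MajorizedBy (![2, 2, 2, 0] : Fin 4 → ℝ) (![3, 1, 1, 1] : Fin 4 → ℝ) := by
    rintro ⟨h1, -⟩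
    obtain ⟨t, ht, hle⟩ := h1 {0, 1, 2}
    fin_cases t <;> simp_all <;> norm_num at hle
  refine ⟨?_, ?_, hL, hR, ?_, ?_⟩
  · intro i; fin_cases i <;> norm_num [L15, R15, Fin.sum_univ_succ, Matrix.cons_val_succ]
  · intro X
    have e1 : (Finset.univ.filter fun n : Fin 4 => ∀ i ∈ X, L15 i n = 1) =
        (Finset.univ.filter fun n : Fin 4 => ∀ i ∈ X, Lb i n = true) := by
      apply Finset.filter_congr; intro n _
      simp only [L_iff]
    have e2 : (Finset.univ.filter fun n : Fin 4 => ∀ i ∈ X, R15 i n = 1) =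
        (Finset.univ.filter fun n : Fin 4 => ∀ i ∈ X, Rb i n = true) := by
      apply Finset.filter_congr; intro n _
      simp only [R_iff]
    rw [e1, e2]; exact domb X
  · rw [hL, hR]; exact hNM
  · intro h
    have := h ![0, 1, 0, 1, 0, 1, 0, 0] (by intro i; fin_cases i <;> norm_num)
    rw [hL, hR] at this
    exact hNM this
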